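/- Let Ω(w) = (1/2)(Σ_{t=1}^T ‖w_t‖)² for w = (w_1,...,w_T) with each w_t ∈ ℝ^B. Then the Moreau proximal problem min_w (τ/2)‖w − g‖² + Ω(w) has a unique solution S_τ(g) given blockwise by: S_τ(g)_t = (o_t / ‖g_t‖) g_t if o_t > 0 and 0 otherwise, where u_t = ‖g_t‖, o = soft(u, ς) is the soft-threshold o_t = max(u_t − ς, 0), and ς is a threshold depending on the sorted values of u (computed as ς = (s/(1+ρs))·Σ_{i=1}^ρ u_{(i)} with s = 1/τ and ρ the largest j such that u_{(j)} − (s/(1+js))Σ_{i=1}^j u_{(i)} > 0, where u_{(1)} ≥ ... ≥ u_{(T)}). -/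

import Mathlib

open RealInnerProductSpace

set_option maxHeartbeats 2000000


/-- the Moreau proximal problem min_w (τ/2)‖w−g‖² + (1/2)(Σ_t ‖w_t‖)²
has a unique solution given blockwise by S_τ(g)_t = (o_t/‖g_t‖)·g_t if o_t > 0 and 0
otherwise, where u_t = ‖g_t‖, o_t = max(u_t − ς, 0), and
ς = (s/(1+ρs))·Σ_{i=1}^ρ u_(i) with s = 1/τ and ρ the largest j such that
u_(j) − (s/(1+js))·Σ_{i=1}^j u_(i) > 0 (u sorted decreasingly via σ). -/
theorem stmt8 (T B : ℕ) (hT : 0 < T) (hB : 0 < B) (τ : ℝ) (hτ : 0 < τ)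
    (g : Fin T → EuclideanSpace ℝ (Fin B))
    (s : ℝ) (hs : s = 1/τ)
    (u : Fin T → ℝ) (hu : ∀ t, u t = ‖g t‖)
    (σ : Equiv.Perm (Fin T)) (hσ : ∀ a b : Fin T, a ≤ b → u (σ b) ≤ u (σ a))
    (ρ : Fin T)
    (hρ : u (σ ρ) - (s/(1 + ((ρ : ℕ) + 1) * s)) * ∑ i ∈ Finset.Iic ρ, u (σ i) > 0)
    (hρmax : ∀ j : Fin T,
      u (σ j) - (s/(1 + ((j : ℕ) + 1) * s)) * ∑ i ∈ Finset.Iic j, u (σ i) > 0 →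
      j ≤ ρ)
    (ς : ℝ) (hς : ς = (s/(1 + ((ρ : ℕ) + 1) * s)) * ∑ i ∈ Finset.Iic ρ, u (σ i))
    (o : Fin T → ℝ) (ho : ∀ t, o t = max (u t - ς) 0)
    (Sg : Fin T → EuclideanSpace ℝ (Fin B))
    (hSg : ∀ t, Sg t = if 0 < o t then (o t / ‖g t‖) • g t else 0)
    (F : (Fin T → EuclideanSpace ℝ (Fin B)) → ℝ)
    (hF : ∀ w, F w = (τ/2) * (∑ t, ‖w t - g t‖^2) + (1/2) * (∑ t, ‖w t‖)^2) :
    (∀ w, F Sg ≤ F w) ∧ (∀ w, (∀ w', F w ≤ F w') → w = Sg) := by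
  have hs0 : 0 < s := by rw [hs]; positivity
  have hu0 : ∀ t, 0 ≤ u t := fun t => by rw [hu t]; exact norm_nonneg _
  set A : ℝ := ∑ i ∈ Finset.Iic ρ, u (σ i) with hA
  have hA0 : 0 ≤ A := Finset.sum_nonneg fun i _ => hu0 _
  have hden : 0 < 1 + (((ρ : ℕ) : ℝ) + 1) * s := by positivity
  have hς0 : 0 ≤ ς := by rw [hς]; positivity
  have hρς : ς < u (σ ρ) := by rw [hς]; linarith [hρ]
  -- for j > ρ, u (σ j) ≤ ς
  have htail : ∀ j : Fin T, ρ < j → u (σ j) ≤ ς := by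
    intro j hj
    have hk1 : (ρ : ℕ) + 1 < T := lt_of_le_of_lt (Nat.succ_le_of_lt hj) j.isLt
    set k : Fin T := ⟨(ρ : ℕ) + 1, hk1⟩ with hkdef
    have hkρ : ¬ k ≤ ρ := by simp [Fin.le_def, hkdef]
    have hkj : k ≤ j := by simp [Fin.le_def, hkdef]; omega
    have h1 : u (σ k) - (s/(1 + (((k : ℕ) : ℝ) + 1) * s)) * ∑ i ∈ Finset.Iic k, u (σ i) ≤ 0 := by
      by_contra h
      push_neg at h
      exact hkρ (hρmax k h)
    have hIic : Finset.Iic k = insert k (Finset.Iic ρ) := by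
      ext i
      simp only [Finset.mem_Iic, Finset.mem_insert, Fin.le_def, Fin.ext_iff, hkdef]
      omega
    have hksum : ∑ i ∈ Finset.Iic k, u (σ i) = u (σ k) + A := by
      rw [hIic, Finset.sum_insert (by simp [Fin.le_def, hkdef])]
    have hkc : ((k : ℕ) : ℝ) = ((ρ : ℕ) : ℝ) + 1 := by simp [hkdef]
    rw [hksum, hkc] at h1
    have hd2 : 0 < 1 + (((ρ : ℕ) : ℝ) + 1 + 1) * s := by positivity
    rw [div_mul_eq_mul_div, sub_nonpos, le_div_iff₀ hd2] at h1
    have h2 : u (σ k) ≤ ς := by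
      rw [hς, div_mul_eq_mul_div, le_div_iff₀ hden]
      nlinarith [h1]
    exact le_trans (hσ k j hkj) h2
  -- values of o along σ
  have hoσ1 : ∀ j : Fin T, j ≤ ρ → o (σ j) = u (σ j) - ς := by
    intro j hj
    have : ς < u (σ j) := lt_of_lt_of_le hρς (hσ j ρ hj)
    rw [ho]; exact max_eq_left (by linarith)
  have hoσ2 : ∀ j : Fin T, ¬ j ≤ ρ → o (σ j) = 0 := by
    intro j hj
    have : u (σ j) ≤ ς := htail j (lt_of_not_ge hj)
    rw [ho]; exact max_eq_right (by linarith)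
  have ho0 : ∀ t, 0 ≤ o t := fun t => by rw [ho]; exact le_max_right _ _
  -- sum of o equals τ ς
  have hX : ∑ t, o t = τ * ς := by
    have h1 : ∑ t, o t = ∑ j, o (σ j) := (Equiv.sum_comp σ o).symm
    have h2 : ∑ j, o (σ j) = ∑ j ∈ Finset.Iic ρ, o (σ j) := by
      symm
      apply Finset.sum_subset (Finset.subset_univ _)
      intro j _ hj
      exact hoσ2 j (by simpa using hj)
    have h3 : ∑ j ∈ Finset.Iic ρ, o (σ j) = A - (((ρ : ℕ) : ℝ) + 1) * ς := by
      rw [Finset.sum_congr rfl (fun j hj => hoσ1 j (Finset.mem_Iic.mp hj))]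
      rw [Finset.sum_sub_distrib, Finset.sum_const, Fin.card_Iic]
      push_cast
      ring
    rw [h1, h2, h3, hς, hs]
    have hτ0 : (τ : ℝ) ≠ 0 := ne_of_gt hτ
    field_simp
    ring
  -- norms of Sg
  have hnx : ∀ t, ‖Sg t‖ = o t := by
    intro t
    rw [hSg t]
    by_cases hot : 0 < o t
    · rw [if_pos hot]
      have hgt : 0 < ‖g t‖ := by
        rw [← hu]
        have : ς < u t := by
          by_contra h
          push_neg at h
          rw [ho] at hot
          have : max (u t - ς) 0 = 0 := max_eq_right (by linarith)
          linarith [hot, this.ge, this.le]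
        linarith
      rw [norm_smul, Real.norm_eq_abs, abs_of_nonneg (div_nonneg (le_of_lt hot) (le_of_lt hgt)),
        div_mul_cancel₀ _ (ne_of_gt hgt)]
    · rw [if_neg hot, norm_zero]
      exact le_antisymm (ho0 t) (not_lt.mp hot)
  -- per-block inequality
  have hblock : ∀ (t : Fin T) (wt : EuclideanSpace ℝ (Fin B)),
      0 ≤ ⟪wt - Sg t, Sg t - g t⟫ + ς * (‖wt‖ - ‖Sg t‖) := by
    intro t wt
    have hcs : ⟪wt, g t⟫ ≤ ‖wt‖ * ‖g t‖ := real_inner_le_norm wt (g t)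
    by_cases hot : 0 < o t
    · have hgt : 0 < ‖g t‖ := by
        have h1 : ‖Sg t‖ = o t := hnx t
        by_contra h
        push_neg at h
        have : g t = 0 := norm_le_zero_iff.mp h
        rw [hSg t, if_pos hot, this, smul_zero, norm_zero] at h1
        linarith
      have hut : u t = ‖g t‖ := hu t
      have hotv : o t = u t - ς := by
        rw [ho]
        apply max_eq_left
        by_contra h
        push_neg at h
        rw [ho] at hot
        have : max (u t - ς) 0 = 0 := max_eq_right h.le
        linarith
      have hSgt : Sg t = (o t / ‖g t‖) • g t := by rw [hSg t, if_pos hot]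
      have hdiff : Sg t - g t = (-(ς / ‖g t‖)) • g t := by
        rw [hSgt]
        have h1 : (o t / ‖g t‖) • g t - g t = (o t / ‖g t‖ - 1) • g t := by
          rw [sub_smul, one_smul]
        rw [h1]
        congr 1
        rw [hotv, hut]
        field_simp
        ring
      rw [inner_sub_left, hdiff, real_inner_smul_right, real_inner_smul_right, hnx t, hSgt,
        real_inner_smul_left, real_inner_self_eq_norm_sq]
      have h2 : (-(ς / ‖g t‖)) * ⟪wt, g t⟫ ≥ -(ς * ‖wt‖) := by
        rw [neg_mul, ge_iff_le, neg_le_neg_iff, div_mul_eq_mul_div, div_le_iff₀ hgt]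
        nlinarith [mul_le_mul_of_nonneg_left hcs hς0]
      have h3 : -(ς / ‖g t‖) * (o t / ‖g t‖ * ‖g t‖ ^ 2) = -(ς * o t) := by
        field_simp
      rw [h3]
      linarith [h2]
    · have hSgt : Sg t = 0 := by rw [hSg t, if_neg hot]
      have hot0 : o t = 0 := le_antisymm (not_lt.mp hot) (ho0 t)
      have hut : u t ≤ ς := by
        by_contra h
        push_neg at h
        rw [ho] at hot0
        rw [max_eq_left (by linarith)] at hot0
        linarith
      rw [hSgt, sub_zero, zero_sub, inner_neg_right, norm_zero, sub_zero]
      have : ⟪wt, g t⟫ ≤ ‖wt‖ * ς := by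
        calc ⟪wt, g t⟫ ≤ ‖wt‖ * ‖g t‖ := hcs
          _ = ‖wt‖ * u t := by rw [hu]
          _ ≤ ‖wt‖ * ς := mul_le_mul_of_nonneg_left hut (norm_nonneg _)
      linarith
  -- the strong-convexity key inequality
  have hkey : ∀ w, F Sg + (τ/2) * ∑ t, ‖w t - Sg t‖^2 ≤ F w := by
    intro w
    rw [hF, hF]
    have hptw : ∀ t : Fin T, ‖w t - g t‖^2 =
        ‖Sg t - g t‖^2 + ‖w t - Sg t‖^2 + 2 * ⟪w t - Sg t, Sg t - g t⟫ := by
      intro t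
      have he : w t - g t = (w t - Sg t) + (Sg t - g t) := by abel
      rw [he, norm_add_sq_real]
      ring
    have hsum1 : ∑ t, ‖w t - g t‖^2 = ∑ t, ‖Sg t - g t‖^2 + ∑ t, ‖w t - Sg t‖^2
        + 2 * ∑ t, ⟪w t - Sg t, Sg t - g t⟫ := by
      rw [Finset.sum_congr rfl (fun t _ => hptw t), Finset.sum_add_distrib,
        Finset.sum_add_distrib, Finset.mul_sum]
    have hsum2 : 0 ≤ ∑ t, ⟪w t - Sg t, Sg t - g t⟫
        + ς * ((∑ t, ‖w t‖) - (∑ t, ‖Sg t‖)) := by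
      have := Finset.sum_nonneg (fun t (_ : t ∈ Finset.univ) => hblock t (w t))
      rw [Finset.sum_add_distrib, ← Finset.mul_sum, Finset.sum_sub_distrib] at this
      linarith [this]
    have hXval : ∑ t, ‖Sg t‖ = τ * ς := by
      rw [Finset.sum_congr rfl (fun t _ => hnx t), hX]
    set W := ∑ t, ‖w t‖ with hW
    set SQ := ∑ t, ‖w t - Sg t‖^2 with hSQ
    rw [hsum1, hXval]
    rw [hXval] at hsum2
    nlinarith [hsum2, sq_nonneg (W - τ * ς), hτ]
  constructor
  · intro w
    have h1 := hkey w
    have h2 : 0 ≤ ∑ t, ‖w t - Sg t‖^2 :=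
      Finset.sum_nonneg fun t _ => sq_nonneg _
    have h3 : 0 ≤ (τ/2) * ∑ t, ‖w t - Sg t‖^2 := mul_nonneg (by linarith) h2
    linarith
  · intro w hw
    have h1 : F w ≤ F Sg := hw Sg
    have h2 := hkey w
    have h3 : ∑ t, ‖w t - Sg t‖^2 ≤ 0 := by
      have hc : 0 < τ/2 := by linarith
      have h5 : (τ/2) * (∑ t, ‖w t - Sg t‖^2) ≤ (τ/2) * 0 := by
        rw [mul_zero]; linarith
      exact le_of_mul_le_mul_left h5 hc
    have h4 : ∑ t, ‖w t - Sg t‖^2 = 0 :=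
      le_antisymm h3 (Finset.sum_nonneg fun t _ => sq_nonneg _)
    funext t
    have h5 : ‖w t - Sg t‖^2 = 0 := by
      have := (Finset.sum_eq_zero_iff_of_nonneg (fun t _ => sq_nonneg ‖w t - Sg t‖)).mp h4 t
        (Finset.mem_univ t)
      exact this
    have : w t - Sg t = 0 := by
      rw [pow_eq_zero_iff (by norm_num)] at h5
      exact norm_eq_zero.mp h5
    exact sub_eq_zero.mp this
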